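/- Suppose that Γ is a countable discrete group, X is a standard Borel space, and Γ ↷ X is a Borel action such that: (1) the induced orbit equivalence relation on X is hyperfinite; (2) for every x ∈ X the stabilizer subgroup Γ_x is a hyperfinite group, meaning that every Borel action of Γ_x on a standard Borel space induces a hyperfinite orbit equivalence relation; and (3) only countably many points of X have infinite stabilizers. Then the action Γ ↷ X is productively hyperfinite: for every standard Borel space Y and every Borel action Γ ↷ Y, the orbit equivalence relation on X × Y induced by the diagonal action γ·(x,y) = (γ·x, γ·y) is hyperfinite. -/

import Mathlib

open MeasureTheory

section Defs

variable {X : Type*} {Y : Type*}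

/-- A countable Borel equivalence relation. -/
structure IsCBER [MeasurableSpace X] (E : X → X → Prop) : Prop where
  equivalence : Equivalence E
  borel : MeasurableSet {p : X × X | E p.1 p.2}
  countable_classes : ∀ x, {y | E x y}.Countable

/-- Hyperfiniteness: an increasing union of finite Borel subequivalence relations. -/
def Hyperfinite [MeasurableSpace X] (E : X → X → Prop) : Prop :=
  ∃ F : ℕ → X → X → Prop,
    (∀ n, Equivalence (F n)) ∧
    (∀ n, MeasurableSet {p : X × X | F n p.1 p.2}) ∧
    (∀ n x y, F n x y → E x y) ∧
    (∀ n x, {y | F n x y}.Finite) ∧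
    (∀ m n, m ≤ n → ∀ x y, F m x y → F n x y) ∧
    (∀ x y, E x y → ∃ n, F n x y)

/-- The restriction of a relation to a subset, as a relation on the subtype. -/
def RestrictRel (E : X → X → Prop) (B : Set X) : ↥B → ↥B → Prop :=
  fun x y => E x.1 y.1

def HyperfiniteOn [MeasurableSpace X] (E : X → X → Prop) (B : Set X) : Prop :=
  Hyperfinite (RestrictRel E B)

def MuHyperfinite [MeasurableSpace X] (E : X → X → Prop) (μ : Measure X) : Prop :=
  ∃ C : Set X, MeasurableSet C ∧ μ Cᶜ = 0 ∧ HyperfiniteOn E C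

def MeasureHyperfinite [MeasurableSpace X] (E : X → X → Prop) : Prop :=
  ∀ μ : Measure X, IsProbabilityMeasure μ → MuHyperfinite E μ

def MuNowhereHyperfinite [MeasurableSpace X] (E : X → X → Prop) (μ : Measure X) : Prop :=
  ∀ B : Set X, MeasurableSet B → μ B ≠ 0 → ¬ HyperfiniteOn E B

def BorelReducible [MeasurableSpace X] [MeasurableSpace Y]
    (E : X → X → Prop) (F : Y → Y → Prop) : Prop :=
  ∃ f : X → Y, Measurable f ∧ ∀ x y, E x y ↔ F (f x) (f y)

def BorelEmbeddable [MeasurableSpace X] [MeasurableSpace Y]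
    (E : X → X → Prop) (F : Y → Y → Prop) : Prop :=
  ∃ f : X → Y, Measurable f ∧ Function.Injective f ∧ ∀ x y, E x y ↔ F (f x) (f y)

def MuReducible [MeasurableSpace X] [MeasurableSpace Y]
    (E : X → X → Prop) (μ : Measure X) (F : Y → Y → Prop) : Prop :=
  ∃ C : Set X, MeasurableSet C ∧ μ Cᶜ = 0 ∧ BorelReducible (RestrictRel E C) F

def MuEmbeddable [MeasurableSpace X] [MeasurableSpace Y]
    (E : X → X → Prop) (μ : Measure X) (F : Y → Y → Prop) : Prop :=
  ∃ C : Set X, MeasurableSet C ∧ μ Cᶜ = 0 ∧ BorelEmbeddable (RestrictRel E C) F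

def MeasureReducible [MeasurableSpace X] [MeasurableSpace Y]
    (E : X → X → Prop) (F : Y → Y → Prop) : Prop :=
  ∀ μ : Measure X, IsProbabilityMeasure μ → MuReducible E μ F

def MeasureEmbeddable [MeasurableSpace X] [MeasurableSpace Y]
    (E : X → X → Prop) (F : Y → Y → Prop) : Prop :=
  ∀ μ : Measure X, IsProbabilityMeasure μ → MuEmbeddable E μ F

def MuNowhereReducible [MeasurableSpace X] [MeasurableSpace Y]
    (E : X → X → Prop) (μ : Measure X) (F : Y → Y → Prop) : Prop :=
  ∀ B : Set X, MeasurableSet B → μ B ≠ 0 → ¬ BorelReducible (RestrictRel E B) F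

def CountableToOne (f : X → Y) : Prop := ∀ y, (f ⁻¹' {y}).Countable

/-- Projective separability of a countable Borel equivalence relation `F` on `Y`. -/
def ProjSeparable [MeasurableSpace Y] (F : Y → Y → Prop) : Prop :=
  ∀ (X : Type) [MeasurableSpace X] [StandardBorelSpace X]
    (E : X → X → Prop), IsCBER E →
    ∀ μ : Measure X, IsProbabilityMeasure μ → MuNowhereHyperfinite E μ →
    ∃ R : Set (X × Y), MeasurableSet R ∧ (∀ x, {y | (x, y) ∈ R}.Countable) ∧
      ∀ B : Set X, MeasurableSet B →
        ∀ φ : ↥B → Y, Measurable φ → CountableToOne φ →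
          (∀ x y : ↥B, E x.1 y.1 → F (φ x) (φ y)) →
          μ {x : X | ∃ h : x ∈ B, (x, φ ⟨x, h⟩) ∉ R} = 0

/-- Acyclicity: at most one injective path between any two points. -/
def AcyclicRel (G : X → X → Prop) : Prop :=
  ∀ (n m : ℕ) (p : Fin (n + 1) → X) (q : Fin (m + 1) → X),
    (∀ i : Fin n, G (p i.castSucc) (p i.succ)) →
    (∀ i : Fin m, G (q i.castSucc) (q i.succ)) →
    Function.Injective p → Function.Injective q →
    p 0 = q 0 → p (Fin.last n) = q (Fin.last m) →
    n = m ∧ ∀ (i : Fin (n + 1)) (j : Fin (m + 1)), (i : ℕ) = (j : ℕ) → p i = q j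

def Treeable [MeasurableSpace X] (E : X → X → Prop) : Prop :=
  ∃ G : X → X → Prop,
    (∀ x, ¬ G x x) ∧ (∀ x y, G x y → G y x) ∧
    MeasurableSet {p : X × X | G p.1 p.2} ∧
    (∀ x y, E x y ↔ Relation.EqvGen G x y) ∧ AcyclicRel G

def Saturation (E : X → X → Prop) (A : Set X) : Set X := {y | ∃ x ∈ A, E x y}

def QuasiInvariant [MeasurableSpace X] (E : X → X → Prop) (μ : Measure X) : Prop :=
  ∀ A : Set X, MeasurableSet A → μ A = 0 → μ (Saturation E A) = 0

def ErgodicRel [MeasurableSpace X] (E : X → X → Prop) (μ : Measure X) : Prop :=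
  ∀ A : Set X, MeasurableSet A → (∀ x y, E x y → x ∈ A → y ∈ A) → μ A = 0 ∨ μ Aᶜ = 0

def AperiodicRel (E : X → X → Prop) : Prop := ∀ x, {y | E x y}.Infinite

/-- `E` is a successor of `𝔼₀` under measure reducibility. -/
def SuccessorOfE0 [MeasurableSpace X] (E : X → X → Prop) : Prop :=
  ¬ MeasureHyperfinite E ∧
  ∀ (Y : Type) [MeasurableSpace Y] [StandardBorelSpace Y] (F : Y → Y → Prop),
    IsCBER F → MeasureReducible F E → ¬ MeasureHyperfinite F → MeasureReducible E F

/-- `ν` is `(E|B)`-invariant. -/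
def InvariantOn [MeasurableSpace X] (E : X → X → Prop) (B : Set X) (ν : Measure X) : Prop :=
  ∀ A : Set X, MeasurableSet A → A ⊆ B →
    ∀ f : X → X, Measurable f → Set.InjOn f A →
      (∀ x ∈ A, f x ∈ B ∧ E x (f x)) → ν A = ν (f '' A)

def InvariantMeasureHyperfinite [MeasurableSpace X] (E : X → X → Prop) : Prop :=
  ∀ B : Set X, MeasurableSet B →
    ∀ ν : Measure X, IsProbabilityMeasure ν → ν Bᶜ = 0 → InvariantOn E B ν →
      ∃ C : Set X, MeasurableSet C ∧ C ⊆ B ∧ ν (B \ C) = 0 ∧ HyperfiniteOn E C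

end Defs

/-- A group is hyperfinite if each of its Borel actions on a standard Borel space induces a
hyperfinite orbit equivalence relation. -/
def HyperfiniteGroup (G : Type*) [Group G] : Prop :=
  ∀ (Z : Type) [MeasurableSpace Z] [StandardBorelSpace Z] (σ : G → Z → Z),
    (∀ z, σ 1 z = z) → (∀ g h z, σ (g * h) z = σ g (σ h z)) →
    (∀ g, Measurable (σ g)) →
    Hyperfinite (fun z w => ∃ g : G, σ g z = w)

theorem productively_hyperfinite_of_hyperfinite_stabilizers
    (Γ : Type) [Group Γ] [Countable Γ]
    (X : Type) [MeasurableSpace X] [StandardBorelSpace X]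
    [MulAction Γ X] (hmeas : ∀ γ : Γ, Measurable (fun x : X => γ • x))
    (h1 : Hyperfinite (fun x y : X => ∃ γ : Γ, γ • x = y))
    (h2 : ∀ x : X, HyperfiniteGroup (MulAction.stabilizer Γ x))
    (h3 : {x : X | (MulAction.stabilizer Γ x : Set Γ).Infinite}.Countable) :
    ∀ (Y : Type) [MeasurableSpace Y] [StandardBorelSpace Y] (σ : Γ → Y → Y),
      (∀ y, σ 1 y = y) → (∀ g h y, σ (g * h) y = σ g (σ h y)) →
      (∀ g, Measurable (σ g)) →
      Hyperfinite (fun p q : X × Y => ∃ γ : Γ, γ • p.1 = q.1 ∧ σ γ p.2 = q.2) := by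
  
  intro Y mY sbY σ hid hmul hσm
  classical
  -- basic lemmas about σ
  have σinv : ∀ (γ : Γ) (y : Y), σ γ⁻¹ (σ γ y) = y := by
    intro γ y; rw [← hmul, inv_mul_cancel, hid]
  have σinj : ∀ γ : Γ, Function.Injective (σ γ) := by
    intro γ a b h
    have h2 := congrArg (σ γ⁻¹) h
    rwa [σinv, σinv] at h2
  -- the saturation T of the set of points with infinite stabilizer
  set T : Set X := {y : X | ∃ x, (MulAction.stabilizer Γ x : Set Γ).Infinite ∧
      ∃ γ : Γ, γ • x = y} with hTdef
  have hTc : T.Countable := by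
    have hT2 : T ⊆ ⋃ x ∈ {x : X | (MulAction.stabilizer Γ x : Set Γ).Infinite},
        Set.range (fun γ : Γ => γ • x) := by
      rintro y ⟨x, hx, γ, hγ⟩
      exact Set.mem_biUnion hx ⟨γ, hγ⟩
    exact (h3.biUnion (fun x _ => Set.countable_range _)).mono hT2
  have hTm : MeasurableSet T := hTc.measurableSet
  have hTinv : ∀ (x y : X) (γ : Γ), γ • x = y → x ∈ T → y ∈ T := by
    rintro x y γ hγ ⟨s, hs, δ, hδ⟩
    exact ⟨s, hs, γ * δ, by rw [mul_smul, hδ, hγ]⟩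
  have hcoset : ∀ x : X, x ∉ T → ∀ x' : X, {γ : Γ | γ • x = x'}.Finite := by
    intro x hx x'
    have hfin : (MulAction.stabilizer Γ x : Set Γ).Finite :=
      Set.not_infinite.mp (fun h => hx ⟨x, h, 1, one_smul _ _⟩)
    by_cases hex : ∃ γ₀ : Γ, γ₀ • x = x'
    · obtain ⟨γ₀, hγ₀⟩ := hex
      apply ((hfin.image (fun s => γ₀ * s))).subset
      intro γ hγ
      refine ⟨γ₀⁻¹ * γ, ?_, by group⟩
      have : (γ₀⁻¹ * γ) • x = x := by
        rw [mul_smul, hγ, ← hγ₀, inv_smul_smul]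
      exact MulAction.mem_stabilizer_iff.mpr this
    · have : {γ : Γ | γ • x = x'} = ∅ := by
        ext γ; simp only [Set.mem_setOf_eq, Set.mem_empty_iff_false, iff_false]
        exact fun h => hex ⟨γ, h⟩
      rw [this]; exact Set.finite_empty
  -- the filtration on X from h1
  obtain ⟨Fx, hFxeq, hFxm, hFxsub, hFxfin, hFxmono, hFxex⟩ := h1
  -- the filtrations from h2 : for each x, the stabilizer action on Y
  have hGall : ∀ x : X,
      Hyperfinite (fun z w : Y => ∃ s : MulAction.stabilizer Γ x, σ (s : Γ) z = w) := by
    intro x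
    refine h2 x Y (fun s y => σ (s : Γ) y) ?_ ?_ (fun s => hσm (s : Γ))
    · intro y; simp only [OneMemClass.coe_one]; exact hid y
    · intro a b y; simp only [Subgroup.coe_mul]; exact hmul _ _ y
  choose G hG using hGall
  have hGeq : ∀ (x : X) (n : ℕ), Equivalence (G x n) := fun x => (hG x).1
  have hGm : ∀ (x : X) (n : ℕ), MeasurableSet {p : Y × Y | G x n p.1 p.2} :=
    fun x => (hG x).2.1
  have hGsub : ∀ (x : X) (n : ℕ) (z w : Y), G x n z w →
      ∃ s : MulAction.stabilizer Γ x, σ (s : Γ) z = w := fun x => (hG x).2.2.1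
  have hGfin : ∀ (x : X) (n : ℕ) (z : Y), {w | G x n z w}.Finite := fun x => (hG x).2.2.2.1
  have hGmono : ∀ (x : X) (m n : ℕ), m ≤ n → ∀ z w, G x m z w → G x n z w :=
    fun x => (hG x).2.2.2.2.1
  have hGex : ∀ (x : X) (z w : Y), (∃ s : MulAction.stabilizer Γ x, σ (s : Γ) z = w) →
      ∃ n, G x n z w := fun x => (hG x).2.2.2.2.2
  -- an injective enumeration of T
  haveI : Countable ↥T := hTc.to_subtype
  obtain ⟨ι, hι⟩ := Countable.exists_injective_nat ↥T
  -- roots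
  have hrex : ∀ t : ↥T, ∃ t' : ↥T,
      ι t' = sInf {n : ℕ | ∃ u : ↥T, ι u = n ∧ ∃ γ : Γ, γ • (t : X) = (u : X)} ∧
      ∃ γ : Γ, γ • (t : X) = (t' : X) := by
    intro t
    have hne : {n : ℕ | ∃ u : ↥T, ι u = n ∧ ∃ γ : Γ, γ • (t : X) = (u : X)}.Nonempty :=
      ⟨ι t, t, rfl, 1, one_smul _ _⟩
    exact Nat.sInf_mem hne
  choose r hrι g hg using hrex
  have hreq : ∀ t t' : ↥T, (∃ γ : Γ, γ • (t : X) = (t' : X)) → r t = r t' := by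
    rintro t t' ⟨δ, hδ⟩
    have hNeq : {n : ℕ | ∃ u : ↥T, ι u = n ∧ ∃ γ : Γ, γ • (t : X) = (u : X)} =
        {n : ℕ | ∃ u : ↥T, ι u = n ∧ ∃ γ : Γ, γ • (t' : X) = (u : X)} := by
      ext n
      constructor
      · rintro ⟨u, hu, γ, hγ⟩
        exact ⟨u, hu, γ * δ⁻¹, by rw [mul_smul, ← hδ, inv_smul_smul]; exact hγ⟩
      · rintro ⟨u, hu, γ, hγ⟩
        exact ⟨u, hu, γ * δ, by rw [mul_smul, hδ]; exact hγ⟩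
    apply hι
    rw [hrι, hrι, hNeq]
  -- the filtration on X × Y
  refine ⟨fun n p q =>
    p = q ∨
    (p.1 ∉ T ∧ q.1 ∉ T ∧ Fx n p.1 q.1 ∧ ∃ γ : Γ, γ • p.1 = q.1 ∧ σ γ p.2 = q.2) ∨
    (∃ t t' : ↥T, (t : X) = p.1 ∧ (t' : X) = q.1 ∧ r t = r t' ∧ ι t ≤ n ∧ ι t' ≤ n ∧
      G ((r t : ↥T) : X) n (σ (g t) p.2) (σ (g t') q.2)),
    ?_, ?_, ?_, ?_, ?_, ?_⟩
  · -- equivalence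
    intro n
    constructor
    · intro p; exact Or.inl rfl
    · rintro p q (rfl | ⟨hp, hq, hF, γ, hγ1, hγ2⟩ | ⟨t, t', hpt, hqt, hrr, hιp, hιq, hGpq⟩)
      · exact Or.inl rfl
      · refine Or.inr (Or.inl ⟨hq, hp, (hFxeq n).symm hF, γ⁻¹, ?_, ?_⟩)
        · rw [← hγ1, inv_smul_smul]
        · rw [← hγ2, σinv]
      · refine Or.inr (Or.inr ⟨t', t, hqt, hpt, hrr.symm, hιq, hιp, ?_⟩)
        rw [← hrr]
        exact (hGeq _ n).symm hGpq
    · rintro p q u (rfl | ⟨hp, hq, hF, γ, hγ1, hγ2⟩ | ⟨t, t', hpt, hqt, hrr, hιp, hιq, hGpq⟩) h2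
      · exact h2
      · rcases h2 with rfl | ⟨hq', hu, hF', γ', hγ1', hγ2'⟩ |
          ⟨s, s', hqs, hus, hrr', hιq', hιu', hGqu⟩
        · exact Or.inr (Or.inl ⟨hp, hq, hF, γ, hγ1, hγ2⟩)
        · refine Or.inr (Or.inl ⟨hp, hu, (hFxeq n).trans hF hF', γ' * γ, ?_, ?_⟩)
          · rw [mul_smul, hγ1, hγ1']
          · rw [hmul, hγ2, hγ2']
        · exact absurd (hqs ▸ s.2) hq
      · rcases h2 with rfl | ⟨hq', hu, hF', γ', hγ1', hγ2'⟩ |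
          ⟨s, s', hqs, hus, hrr', hιq', hιu', hGqu⟩
        · exact Or.inr (Or.inr ⟨t, t', hpt, hqt, hrr, hιp, hιq, hGpq⟩)
        · exact absurd (hqt ▸ t'.2) hq'
        · have hts : t' = s := Subtype.ext (by rw [hqt, hqs])
          subst hts
          refine Or.inr (Or.inr ⟨t, s', hpt, hus, hrr.trans hrr', hιp, hιu', ?_⟩)
          refine (hGeq _ n).trans hGpq ?_
          rw [hrr]
          exact hGqu
  · -- measurability
    intro n
    letI := upgradeStandardBorel (X × Y)
    have hdiag : MeasurableSet {pq : (X × Y) × (X × Y) | pq.1 = pq.2} :=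
      (measurable_fst.prodMk measurable_snd) isClosed_diagonal.measurableSet
    have e1 : {pq : (X × Y) × (X × Y) |
        pq.1.1 ∉ T ∧ pq.2.1 ∉ T ∧ Fx n pq.1.1 pq.2.1 ∧
          ∃ γ : Γ, γ • pq.1.1 = pq.2.1 ∧ σ γ pq.1.2 = pq.2.2} =
        ((fun pq : (X × Y) × (X × Y) => pq.1.1) ⁻¹' Tᶜ) ∩
        ((fun pq : (X × Y) × (X × Y) => pq.2.1) ⁻¹' Tᶜ) ∩
        ((fun pq : (X × Y) × (X × Y) => (pq.1.1, pq.2.1)) ⁻¹' {p : X × X | Fx n p.1 p.2}) ∩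
        (⋃ γ : Γ, (fun pq : (X × Y) × (X × Y) => (((γ • pq.1.1, σ γ pq.1.2) : X × Y), pq.2))
          ⁻¹' {pq : (X × Y) × (X × Y) | pq.1 = pq.2}) := by
      ext pq
      simp only [Set.mem_setOf_eq, Set.mem_inter_iff, Set.mem_preimage, Set.mem_compl_iff,
        Set.mem_iUnion, Prod.ext_iff]
      tauto
    have e2 : {pq : (X × Y) × (X × Y) |
        ∃ t t' : ↥T, (t : X) = pq.1.1 ∧ (t' : X) = pq.2.1 ∧ r t = r t' ∧ ι t ≤ n ∧ ι t' ≤ n ∧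
          G ((r t : ↥T) : X) n (σ (g t) pq.1.2) (σ (g t') pq.2.2)} =
        ⋃ t : ↥T, ⋃ t' : ↥T,
          (((fun pq : (X × Y) × (X × Y) => pq.1.1) ⁻¹' {(t : X)}) ∩
           ((fun pq : (X × Y) × (X × Y) => pq.2.1) ⁻¹' {(t' : X)}) ∩
           {pq : (X × Y) × (X × Y) | r t = r t' ∧ ι t ≤ n ∧ ι t' ≤ n} ∩
           ((fun pq : (X × Y) × (X × Y) => (σ (g t) pq.1.2, σ (g t') pq.2.2))
             ⁻¹' {z : Y × Y | G ((r t : ↥T) : X) n z.1 z.2})) := by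
      ext pq
      simp only [Set.mem_setOf_eq, Set.mem_iUnion, Set.mem_inter_iff, Set.mem_preimage,
        Set.mem_singleton_iff]
      constructor
      · rintro ⟨t, t', h1, h2, h3, h4, h5, h6⟩
        exact ⟨t, t', ⟨⟨h1.symm, h2.symm⟩, h3, h4, h5⟩, h6⟩
      · rintro ⟨t, t', ⟨⟨h1, h2⟩, h3, h4, h5⟩, h6⟩
        exact ⟨t, t', h1.symm, h2.symm, h3, h4, h5, h6⟩
    have hs1 : Measurable (fun pq : (X × Y) × (X × Y) => pq.1.1) :=
      measurable_fst.comp measurable_fst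
    have hs2 : Measurable (fun pq : (X × Y) × (X × Y) => pq.2.1) :=
      measurable_fst.comp measurable_snd
    simp only [Set.setOf_or]
    refine hdiag.union (MeasurableSet.union ?_ ?_)
    · rw [show {pq : (X × Y) × (X × Y) |
          pq.1.1 ∉ T ∧ pq.2.1 ∉ T ∧ Fx n pq.1.1 pq.2.1 ∧
            ∃ γ : Γ, γ • pq.1.1 = pq.2.1 ∧ σ γ pq.1.2 = pq.2.2} = _ from e1]
      refine (((hs1 hTm.compl).inter (hs2 hTm.compl)).inter
        ((hs1.prodMk hs2) (hFxm n))).inter (MeasurableSet.iUnion fun γ => ?_)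
      exact (((hmeas γ).comp hs1).prodMk ((hσm γ).comp (measurable_snd.comp measurable_fst))
        |>.prodMk measurable_snd) hdiag
    · rw [show {pq : (X × Y) × (X × Y) |
          ∃ t t' : ↥T, (t : X) = pq.1.1 ∧ (t' : X) = pq.2.1 ∧ r t = r t' ∧ ι t ≤ n ∧ ι t' ≤ n ∧
            G ((r t : ↥T) : X) n (σ (g t) pq.1.2) (σ (g t') pq.2.2)} = _ from e2]
      refine MeasurableSet.iUnion fun t => MeasurableSet.iUnion fun t' => ?_
      refine (((hs1 (measurableSet_singleton _)).inter (hs2 (measurableSet_singleton _))).inter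
        (MeasurableSet.const _)).inter ?_
      exact (((hσm (g t)).comp (measurable_snd.comp measurable_fst)).prodMk
        ((hσm (g t')).comp (measurable_snd.comp measurable_snd))) (hGm _ n)
  · -- contained in the orbit relation
    rintro n p q (rfl | ⟨hp, hq, hF, γ, hγ1, hγ2⟩ | ⟨t, t', hpt, hqt, hrr, hιp, hιq, hGpq⟩)
    · exact ⟨1, one_smul _ _, hid _⟩
    · exact ⟨γ, hγ1, hγ2⟩
    · obtain ⟨s, hs⟩ := hGsub _ n _ _ hGpq
      have hsρ : (s : Γ) • ((r t : ↥T) : X) = ((r t : ↥T) : X) :=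
        MulAction.mem_stabilizer_iff.mp s.2
      refine ⟨(g t')⁻¹ * ((s : Γ) * g t), ?_, ?_⟩
      · have h1 : g t • p.1 = ((r t : ↥T) : X) := by rw [← hpt]; exact hg t
        have h2 : g t' • q.1 = ((r t : ↥T) : X) := by rw [← hqt, hg t', ← hrr]
        rw [mul_smul, mul_smul, h1, hsρ, ← h2, inv_smul_smul]
      · rw [hmul, hmul, hs, σinv]
  · -- finite classes
    intro n p
    have hA : {q : X × Y | p = q}.Finite :=
      (Set.finite_singleton p).subset (fun q hq => by simpa using hq.symm)
    have hB : {q : X × Y | p.1 ∉ T ∧ q.1 ∉ T ∧ Fx n p.1 q.1 ∧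
        ∃ γ : Γ, γ • p.1 = q.1 ∧ σ γ p.2 = q.2}.Finite := by
      by_cases hpT : p.1 ∈ T
      · refine Set.Finite.subset Set.finite_empty ?_
        rintro q ⟨hp', _⟩; exact absurd hpT hp'
      · have hγfin : {γ : Γ | Fx n p.1 (γ • p.1)}.Finite := by
          apply ((hFxfin n p.1).biUnion (fun x' _ => hcoset p.1 hpT x')).subset
          intro γ hγ
          exact Set.mem_biUnion hγ rfl
        apply (hγfin.image (fun γ => ((γ • p.1, σ γ p.2) : X × Y))).subset
        rintro q ⟨_, _, hF, γ, hγ1, hγ2⟩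
        refine ⟨γ, by rw [Set.mem_setOf_eq, hγ1]; exact hF, ?_⟩
        show ((γ • p.1, σ γ p.2) : X × Y) = q
        rw [hγ1, hγ2]
    have hC : {q : X × Y | ∃ t t' : ↥T, (t : X) = p.1 ∧ (t' : X) = q.1 ∧ r t = r t' ∧
        ι t ≤ n ∧ ι t' ≤ n ∧ G ((r t : ↥T) : X) n (σ (g t) p.2) (σ (g t') q.2)}.Finite := by
      by_cases hpT : p.1 ∈ T
      · set t0 : ↥T := ⟨p.1, hpT⟩ with ht0
        have hI : {u : ↥T | ι u ≤ n}.Finite :=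
          Set.Finite.preimage (Set.injOn_of_injective hι) (Set.finite_Iic n)
        refine Set.Finite.subset (hI.biUnion (fun t' _ =>
          ((hGfin ((r t0 : ↥T) : X) n (σ (g t0) p.2)).preimage
            (Set.injOn_of_injective (σinj (g t')))).image
            (fun y => (((t' : X), y) : X × Y)))) ?_
        rintro q ⟨t, t', hpt, hqt, hrr, hιp, hιq, hGq⟩
        have ht : t = t0 := Subtype.ext hpt
        subst ht
        refine Set.mem_biUnion hιq ⟨q.2, hGq, ?_⟩
        show (((t' : X), q.2) : X × Y) = q
        rw [hqt]
      · refine Set.Finite.subset Set.finite_empty ?_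
        rintro q ⟨t, _, hpt, _⟩
        exact absurd (hpt ▸ t.2) hpT
    refine Set.Finite.subset (hA.union (hB.union hC)) ?_
    rintro q (h | h | h)
    · exact Or.inl h
    · exact Or.inr (Or.inl h)
    · exact Or.inr (Or.inr h)
  · -- monotone
    rintro m n hmn p q (rfl | ⟨hp, hq, hF, hE⟩ | ⟨t, t', hpt, hqt, hrr, hιp, hιq, hGpq⟩)
    · exact Or.inl rfl
    · exact Or.inr (Or.inl ⟨hp, hq, hFxmono m n hmn _ _ hF, hE⟩)
    · exact Or.inr (Or.inr ⟨t, t', hpt, hqt, hrr, hιp.trans hmn, hιq.trans hmn,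
        hGmono _ m n hmn _ _ hGpq⟩)
  · -- exhausting
    rintro p q ⟨γ, hγ1, hγ2⟩
    by_cases hp : p.1 ∈ T
    · have hq : q.1 ∈ T := hTinv p.1 q.1 γ hγ1 hp
      set t : ↥T := ⟨p.1, hp⟩
      set t' : ↥T := ⟨q.1, hq⟩
      have hrr : r t = r t' := hreq t t' ⟨γ, hγ1⟩
      have hmem : (g t' * γ * (g t)⁻¹) ∈ MulAction.stabilizer Γ ((r t : ↥T) : X) := by
        refine MulAction.mem_stabilizer_iff.mpr ?_
        have h1 : (g t)⁻¹ • ((r t : ↥T) : X) = p.1 := by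
          rw [← hg t, inv_smul_smul]
        rw [mul_smul, mul_smul, h1, hγ1, hrr]
        exact hg t'
      have hrel : ∃ s : MulAction.stabilizer Γ ((r t : ↥T) : X),
          σ (s : Γ) (σ (g t) p.2) = σ (g t') q.2 := by
        refine ⟨⟨g t' * γ * (g t)⁻¹, hmem⟩, ?_⟩
        have e : (g t' * γ * (g t)⁻¹) * g t = g t' * γ := by group
        calc σ (g t' * γ * (g t)⁻¹) (σ (g t) p.2)
            = σ ((g t' * γ * (g t)⁻¹) * g t) p.2 := (hmul _ _ _).symm
          _ = σ (g t' * γ) p.2 := by rw [e]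
          _ = σ (g t') (σ γ p.2) := hmul _ _ _
          _ = σ (g t') q.2 := by rw [hγ2]
      obtain ⟨m, hm⟩ := hGex _ _ _ hrel
      refine ⟨max m (max (ι t) (ι t')), Or.inr (Or.inr ⟨t, t', rfl, rfl, hrr,
        le_max_of_le_right (le_max_left _ _), le_max_of_le_right (le_max_right _ _),
        hGmono _ m _ (le_max_left _ _) _ _ hm⟩)⟩
    · have hq : q.1 ∉ T := by
        intro h
        exact hp (hTinv q.1 p.1 γ⁻¹ (by rw [← hγ1, inv_smul_smul]) h)
      obtain ⟨n, hn⟩ := hFxex p.1 q.1 ⟨γ, hγ1⟩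
      exact ⟨n, Or.inr (Or.inl ⟨hp, hq, hn, γ, hγ1, hγ2⟩)⟩
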